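/- Let X=[k₁], Y=[k₂], s ∈ ℤ₊, and define two multipermutations over alphabet X×Y in which each letter occurs s times: π orders occurrences (x,y,r) (r ∈ [s]) lexicographically by (x, y, r), and π' orders them lexicographically by (x, r, −y). Then LCS(π, π') ≤ k₁·s and LCS(π, reverse(π')) ≤ k₂ + s − 1. -/

import Mathlib

/-- The multipermutation over `[k₁] × [k₂]` whose occurrences `(x,y,r)` are
ordered lexicographically by `(x, y, r)`. -/
def piWord (k₁ k₂ s : ℕ) : List (ℕ × ℕ) :=
  (List.range k₁).flatMap fun x =>
    (List.range k₂).flatMap fun y => List.replicate s (x, y)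

/-- The multipermutation over `[k₁] × [k₂]` whose occurrences `(x,y,r)` are
ordered lexicographically by `(x, r, -y)`. -/
def piWord' (k₁ k₂ s : ℕ) : List (ℕ × ℕ) :=
  (List.range k₁).flatMap fun x =>
    (List.range s).flatMap fun _ => ((List.range k₂).reverse).map fun y => (x, y)

namespace MPAux

open List

/-- `s` copies of the increasing run `0,1,…,k-1`. -/
def sig (s k : ℕ) : List ℕ := (range s).flatMap fun _ => range k

/-- `s` copies of the decreasing run `k-1,…,1,0`. -/
def tau (s k : ℕ) : List ℕ := (range s).flatMap fun _ => (range k).reverse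

lemma flatMap_const_succ {α : Type*} (s : ℕ) (c : List α) :
    (range (s+1)).flatMap (fun _ => c) = c ++ (range s).flatMap (fun _ => c) := by
  have h : ∀ m, (range m).flatMap (fun _ => c) = (replicate m c).flatten := by
    intro m
    induction m with
    | zero => simp
    | succ n ih => rw [range_succ, flatMap_append, ih, replicate_succ', flatten_append]; simp
  rw [h, h, replicate_succ, flatten_cons]

lemma tau_reverse (s k : ℕ) : (tau s k).reverse = sig s k := by
  induction s with
  | zero => simp [tau, sig]
  | succ n ih =>
      have h1 : tau (n+1) k = tau n k ++ (range k).reverse := by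
        simp [tau, range_succ]
      have h2 : sig (n+1) k = range k ++ sig n k := by
        simpa [sig] using flatMap_const_succ n (range k)
      rw [h1, reverse_append, reverse_reverse, ih, h2]

lemma mem_sig {s k y : ℕ} (h : y ∈ sig s k) : y < k := by
  simp only [sig, mem_flatMap, mem_range] at h
  obtain ⟨a, -, h⟩ := h
  exact h

/-- a strictly increasing list of naturals grows at least by one each step -/
lemma lemC : ∀ (u : List ℕ) (a y : ℕ), u.Pairwise (· < ·) →
    u.head? = some a → u.getLast? = some y → u.length + a ≤ 1 + y
  | [], _, _, _, h1, _ => by simp at h1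
  | [b], a, y, _, h1, h2 => by
      simp only [head?_cons, Option.some.injEq] at h1
      simp only [getLast?_singleton, Option.some.injEq] at h2
      simp [← h1, ← h2]
  | b :: c :: t, a, y, hp, h1, h2 => by
      have hbc : b < c := (pairwise_cons.mp hp).1 c (by simp)
      rw [getLast?_cons_cons] at h2
      have ih := lemC (c :: t) c y (pairwise_cons.mp hp).2 (by simp) h2
      simp only [head?_cons, Option.some.injEq] at h1
      simp only [length_cons] at ih ⊢
      omega

lemma len_le_one {u : List ℕ} (h1 : u.Pairwise (· ≤ ·))
    (h2 : u.Pairwise (fun a b => b < a)) : u.length ≤ 1 := by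
  match u with
  | [] => simp
  | [_] => simp
  | a :: b :: t =>
      have hab : a ≤ b := (pairwise_cons.mp h1).1 b mem_cons_self
      have hba : b < a := (pairwise_cons.mp h2).1 b mem_cons_self
      omega

lemma core1 (k : ℕ) : ∀ s (u : List ℕ), u.Pairwise (· ≤ ·) → u <+ tau s k →
    u.length ≤ s := by
  intro s
  induction s with
  | zero =>
      intro u _ hsub
      simp only [tau, range_zero, flatMap_nil] at hsub
      simp [sublist_nil.mp hsub]
  | succ n ih =>
      intro u hp hsub
      have htau : tau (n+1) k = tau n k ++ (range k).reverse := by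
        simp [tau, range_succ]
      rw [htau] at hsub
      obtain ⟨u₁, u₂, rfl, h₁, h₂⟩ := sublist_append_iff.mp hsub
      have hp₁ : u₁.Pairwise (· ≤ ·) := hp.sublist (sublist_append_left u₁ u₂)
      have hp₂ : u₂.Pairwise (· ≤ ·) := hp.sublist (sublist_append_right u₁ u₂)
      have hrev : ((range k).reverse).Pairwise (fun a b => b < a) :=
        pairwise_reverse.mpr (pairwise_lt_range : (range k).Pairwise (· < ·))
      have h2' : u₂.Pairwise (fun a b => b < a) := hrev.sublist h₂
      have := len_le_one hp₂ h2'
      have := ih u₁ hp₁ h₁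
      rw [length_append]
      omega

lemma core2 (k : ℕ) : ∀ s (u : List ℕ) (a y : ℕ), u.Pairwise (· ≤ ·) →
    u <+ sig s k → u.head? = some a → u.getLast? = some y →
    u.length + a ≤ s + y := by
  intro s
  induction s with
  | zero =>
      intro u a y _ hsub h1 _
      simp only [sig, range_zero, flatMap_nil] at hsub
      rw [sublist_nil.mp hsub] at h1
      simp at h1
  | succ n ih =>
      intro u a y hp hsub h1 h2
      have hsig : sig (n+1) k = sig n k ++ range k := by
        simp [sig, range_succ]
      rw [hsig] at hsub
      obtain ⟨u₁, u₂, rfl, hs₁, hs₂⟩ := sublist_append_iff.mp hsub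
      rcases eq_or_ne u₂ [] with rfl | h2ne
      · rw [append_nil] at hp h1 h2 ⊢
        have := ih u₁ a y hp hs₁ h1 h2
        omega
      rcases eq_or_ne u₁ [] with rfl | h1ne
      · rw [nil_append] at hp h1 h2 ⊢
        have hlt : u₂.Pairwise (· < ·) := (pairwise_lt_range : (range k).Pairwise (· < ·)).sublist hs₂
        have := lemC u₂ a y hlt h1 h2
        omega
      · -- both parts nonempty
        have hp₁ : u₁.Pairwise (· ≤ ·) := hp.sublist (sublist_append_left u₁ u₂)
        have hlt : u₂.Pairwise (· < ·) := (pairwise_lt_range : (range k).Pairwise (· < ·)).sublist hs₂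
        obtain ⟨c, t₁, rfl⟩ := exists_cons_of_ne_nil h1ne
        obtain ⟨b, t₂, rfl⟩ := exists_cons_of_ne_nil h2ne
        have ha : a = c := by
          rw [cons_append, head?_cons] at h1
          exact (Option.some.injEq _ _ ▸ h1).symm
        have h2' : (b :: t₂).getLast? = some y := by
          rw [getLast?_append_of_ne_nil _ (by simp : (b :: t₂) ≠ [])] at h2
          exact h2
        set l₁ := (c :: t₁).getLast (by simp) with hl₁
        have I1 := ih (c :: t₁) c l₁ hp₁ hs₁ (by simp)
          (by rw [getLast?_eq_getLast (by simp)])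
        have I2 := lemC (b :: t₂) b y hlt (by simp) h2'
        have hcross : l₁ ≤ b :=
          (pairwise_append.mp hp).2.2 _ (getLast_mem (by simp)) _ (by simp)
        rw [length_append, ha]
        omega

/-- the block of `piWord` at abscissa `x` -/
def blkP (x k s : ℕ) : List (ℕ × ℕ) := (range k).flatMap fun y => replicate s (x, y)

/-- the block of `piWord'` at abscissa `x` -/
def blkQ (x k s : ℕ) : List (ℕ × ℕ) :=
  (range s).flatMap fun _ => ((range k).reverse).map fun y => (x, y)

lemma piWord_succ (n k s : ℕ) : piWord (n+1) k s = piWord n k s ++ blkP n k s := by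
  simp [piWord, blkP, range_succ]

lemma piWord'_succ (n k s : ℕ) : piWord' (n+1) k s = piWord' n k s ++ blkQ n k s := by
  simp [piWord', blkQ, range_succ]

lemma mem_piWord {n k s : ℕ} {a : ℕ × ℕ} (h : a ∈ piWord n k s) : a.1 < n := by
  simp only [piWord, mem_flatMap, mem_range, mem_replicate] at h
  obtain ⟨x, hx, y, hy, -, rfl⟩ := h
  exact hx

lemma mem_piWord' {n k s : ℕ} {a : ℕ × ℕ} (h : a ∈ piWord' n k s) : a.1 < n := by
  simp only [piWord', mem_flatMap, mem_range, mem_map] at h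
  obtain ⟨x, hx, r, hr, y, hy, rfl⟩ := h
  exact hx

lemma mem_blkP {x k s : ℕ} {a : ℕ × ℕ} (h : a ∈ blkP x k s) : a.1 = x := by
  simp only [blkP, mem_flatMap, mem_range, mem_replicate] at h
  obtain ⟨y, hy, -, rfl⟩ := h
  rfl

lemma mem_blkQ {x k s : ℕ} {a : ℕ × ℕ} (h : a ∈ blkQ x k s) : a.1 = x := by
  simp only [blkQ, mem_flatMap, mem_range, mem_map, mem_reverse] at h
  obtain ⟨r, hr, y, hy, rfl⟩ := h
  rfl

lemma pairwise_blkP (x k s : ℕ) : (blkP x k s).Pairwise (fun a b => a.2 ≤ b.2) := by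
  unfold blkP
  rw [pairwise_flatMap]
  constructor
  · intro y _
    rw [pairwise_replicate]
    right; rfl
  · refine (pairwise_lt_range : (range k).Pairwise (· < ·)).imp ?_
    intro y₁ y₂ h a ha b hb
    rw [mem_replicate] at ha hb
    rw [ha.2, hb.2]
    exact le_of_lt h

lemma map_snd_blkQ (x k s : ℕ) : (blkQ x k s).map Prod.snd = tau s k := by
  simp [blkQ, tau, map_flatMap, map_map, Function.comp]

lemma blk1 {x k s : ℕ} {w : List (ℕ × ℕ)} (h1 : w <+ blkP x k s)
    (h2 : w <+ blkQ x k s) : w.length ≤ s := by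
  have hp : (w.map Prod.snd).Pairwise (· ≤ ·) :=
    pairwise_map.mpr ((pairwise_blkP x k s).sublist h1)
  have hsub : w.map Prod.snd <+ tau s k := by
    rw [← map_snd_blkQ x k s]
    exact h2.map _
  have := core1 k s _ hp hsub
  simpa using this

lemma blk2 {x k s : ℕ} {w : List (ℕ × ℕ)} (h1 : w <+ blkP x k s)
    (h2 : w <+ (blkQ x k s).reverse) : w.length ≤ k + s - 1 := by
  rcases eq_or_ne w [] with rfl | hw
  · simp
  have hu : w.map Prod.snd ≠ [] := by simpa using hw
  have hp : (w.map Prod.snd).Pairwise (· ≤ ·) :=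
    pairwise_map.mpr ((pairwise_blkP x k s).sublist h1)
  have hsub : w.map Prod.snd <+ sig s k := by
    rw [← tau_reverse s k, ← map_snd_blkQ x k s, ← map_reverse]
    exact h2.map _
  have hh : (w.map Prod.snd).head? = some ((w.map Prod.snd).head hu) :=
    head?_eq_head hu
  have hl : (w.map Prod.snd).getLast? = some ((w.map Prod.snd).getLast hu) :=
    getLast?_eq_getLast hu
  have hmain := core2 k s _ _ _ hp hsub hh hl
  have hlast : (w.map Prod.snd).getLast hu < k :=
    mem_sig (hsub.subset (getLast_mem hu))
  have hlen : (w.map Prod.snd).length = w.length := by simp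
  omega

lemma split_lemma {α : Type*} (p : α → Prop) (A B C D w : List α)
    (h1 : w <+ A ++ B) (h2 : w <+ C ++ D)
    (hA : ∀ a ∈ A, p a) (hB : ∀ a ∈ B, ¬ p a)
    (hC : ∀ a ∈ C, p a) (hD : ∀ a ∈ D, ¬ p a) :
    ∃ u v, w = u ++ v ∧ u <+ A ∧ u <+ C ∧ v <+ B ∧ v <+ D := by
  obtain ⟨u₁, v₁, rfl, hu₁, hv₁⟩ := sublist_append_iff.mp h1
  obtain ⟨u₂, v₂, heq, hu₂, hv₂⟩ := sublist_append_iff.mp h2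
  have hpre₁ : u₁ <+: u₁ ++ v₁ := prefix_append u₁ v₁
  have hpre₂ : u₂ <+: u₁ ++ v₁ := heq ▸ prefix_append u₂ v₂
  have key : u₁ = u₂ := by
    rcases prefix_or_prefix_of_prefix hpre₁ hpre₂ with h | h
    · obtain ⟨m, rfl⟩ := h
      rcases m with _ | ⟨a, m⟩
      · simp
      · exfalso
        rw [append_assoc] at heq
        have hv : v₁ = (a :: m) ++ v₂ := (append_right_injective u₁) heq
        have hpa : p a := hC a (hu₂.subset (by simp))
        have hna : ¬ p a := hB a (hv₁.subset (by rw [hv]; simp))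
        exact hna hpa
    · obtain ⟨m, rfl⟩ := h
      rcases m with _ | ⟨a, m⟩
      · simp
      · exfalso
        rw [append_assoc] at heq
        have hv : (a :: m) ++ v₁ = v₂ := (append_right_injective u₂) heq
        have hpa : p a := hA a (hu₁.subset (by simp))
        have hna : ¬ p a := hD a (hv₂.subset (by rw [← hv]; simp))
        exact hna hpa
  subst key
  have hv : v₁ = v₂ := (append_right_injective u₁) heq
  subst hv
  exact ⟨u₁, v₁, rfl, hu₁, hu₂, hv₁, hv₂⟩

lemma part1 (k₂ s : ℕ) : ∀ k₁ (w : List (ℕ × ℕ)), w <+ piWord k₁ k₂ s →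
    w <+ piWord' k₁ k₂ s → w.length ≤ k₁ * s := by
  intro k₁
  induction k₁ with
  | zero =>
      intro w h1 _
      have : piWord 0 k₂ s = [] := by simp [piWord]
      rw [this, sublist_nil] at h1
      simp [h1]
  | succ n ih =>
      intro w h1 h2
      rw [piWord_succ] at h1
      rw [piWord'_succ] at h2
      obtain ⟨u, v, rfl, huA, huC, hvB, hvD⟩ :=
        split_lemma (fun a => a.1 < n) _ _ _ _ w h1 h2
          (fun a ha => mem_piWord ha)
          (fun a ha => by have := mem_blkP ha; omega)
          (fun a ha => mem_piWord' ha)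
          (fun a ha => by have := mem_blkQ ha; omega)
      have h₁ := ih u huA huC
      have h₂ := blk1 hvB hvD
      rw [length_append, Nat.succ_mul]
      omega

lemma part2 (k₂ s : ℕ) : ∀ k₁ (w : List (ℕ × ℕ)), w <+ piWord k₁ k₂ s →
    w <+ (piWord' k₁ k₂ s).reverse → w.length ≤ k₂ + s - 1 := by
  intro k₁
  induction k₁ with
  | zero =>
      intro w h1 _
      have : piWord 0 k₂ s = [] := by simp [piWord]
      rw [this, sublist_nil] at h1
      simp [h1]
  | succ n ih =>
      intro w h1 h2
      rw [piWord_succ] at h1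
      rw [piWord'_succ, reverse_append] at h2
      obtain ⟨u₁, v₁, e₁, hu₁, hv₁⟩ := sublist_append_iff.mp h1
      obtain ⟨u₂, v₂, e₂, hu₂, hv₂⟩ := sublist_append_iff.mp h2
      rcases u₁ with _ | ⟨a, t₁⟩
      · -- w is entirely in the block blkP n
        rw [nil_append] at e₁
        have hv₂e : v₂ = [] := by
          rcases v₂ with _ | ⟨b, t₂⟩
          · rfl
          · exfalso
            have hbw : b ∈ w := by rw [e₂]; simp
            have hA : b.1 = n := mem_blkP (hv₁.subset (e₁ ▸ hbw))
            have hB : b.1 < n := mem_piWord' (mem_reverse.mp (hv₂.subset (by simp)))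
            omega
        rw [hv₂e, append_nil] at e₂
        exact blk2 (show w <+ _ by rw [e₁]; exact hv₁)
          (show w <+ _ by rw [e₂]; exact hu₂)
      · rcases u₂ with _ | ⟨b, t₂⟩
        · -- w is entirely in (piWord' n …).reverse
          rw [nil_append] at e₂
          have hv₁e : v₁ = [] := by
            rcases v₁ with _ | ⟨c, t₃⟩
            · rfl
            · exfalso
              have hcw : c ∈ w := by rw [e₁]; simp
              have hA : c.1 < n := mem_piWord' (mem_reverse.mp (hv₂.subset (e₂ ▸ hcw)))
              have hB : c.1 = n := mem_blkP (hv₁.subset (by simp))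
              omega
          rw [hv₁e, append_nil] at e₁
          exact ih w (show w <+ _ by rw [e₁]; exact hu₁)
            (show w <+ _ by rw [e₂]; exact hv₂)
        · -- both heads exist: contradiction on the first element of w
          exfalso
          rw [e₁] at e₂
          rw [cons_append, cons_append] at e₂
          injection e₂ with hab _
          have hA : a.1 < n := mem_piWord (hu₁.subset (by simp))
          have hB : a.1 = n := by
            rw [hab]
            exact mem_blkQ (mem_reverse.mp (hu₂.subset (by simp)))
          omega

end MPAux

theorem stmt11 (k₁ k₂ s : ℕ) (hs : 0 < s) :
    (∀ w : List (ℕ × ℕ), w.Sublist (piWord k₁ k₂ s) → w.Sublist (piWord' k₁ k₂ s) →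
      w.length ≤ k₁ * s) ∧
    (∀ w : List (ℕ × ℕ), w.Sublist (piWord k₁ k₂ s) →
      w.Sublist (piWord' k₁ k₂ s).reverse → w.length ≤ k₂ + s - 1) := by
  exact ⟨fun w h1 h2 => MPAux.part1 k₂ s k₁ w h1 h2,
         fun w h1 h2 => MPAux.part2 k₂ s k₁ w h1 h2⟩
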